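/- arXiv:2305.12143 — 4 statements merged into one kernel-verified Lean document; each statement's English description precedes it below -/
import Mathlib

section
/- A set of models M over a finite variable set V is closed under pairwise intersection if and only if M is exactly the set of models of some Horn formula (a finite conjunction of Horn clauses). -/
/-- A Horn clause: an antecedent (set of variables) and a consequent
which is either a variable (`some q`) or falsum `⊥` (`none`). -/
structure HornClause (V : Type*) where
  ant : Set V
  con : Option V

/-- A model `x ⊆ V` satisfies a Horn clause. -/
def HornClause.sat {V : Type*} (x : Set V) (h : HornClause V) : Prop :=
  ¬ h.ant ⊆ x ∨ ∃ q, h.con = some q ∧ q ∈ x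

/-- Closure of a family of models under intersections of nonempty subfamilies. -/
def interClosure {V : Type*} (M : Set (Set V)) : Set (Set V) :=
  {x | ∃ N ⊆ M, N.Nonempty ∧ x = ⋂₀ N}

lemma aux_finset {V : Type*} (M : Set (Set V)) (hM : ∀ x ∈ M, ∀ y ∈ M, x ∩ y ∈ M)
    (F : Finset (Set V)) (hne : F.Nonempty) (hsub : ↑F ⊆ M) : ⋂₀ (↑F : Set (Set V)) ∈ M := by
  classical
  induction hne using Finset.Nonempty.cons_induction with
  | singleton a => simpa using hsub (by simp)
  | cons a F ha hne ih =>
    have h1 : a ∈ M := hsub (by simp)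
    have h2 : ⋂₀ (↑F : Set (Set V)) ∈ M := ih (fun y hy => hsub (by simp [Finset.mem_cons]; right; exact hy))
    have : (↑(Finset.cons a F ha) : Set (Set V)) = insert a ↑F := by simp
    rw [this, Set.sInter_insert]
    exact hM a h1 _ h2

lemma aux_sInter {V : Type*} (M : Set (Set V)) (hM : ∀ x ∈ M, ∀ y ∈ M, x ∩ y ∈ M) :
    ∀ S : Set (Set V), S.Finite → S ⊆ M → S.Nonempty → ⋂₀ S ∈ M := by
  intro S hS hsub hne
  have h := aux_finset M hM hS.toFinset (by simpa using hne) (by simpa using hsub)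
  simpa using h

theorem stmt2 {V : Type*} [Fintype V] (M : Set (Set V)) :
    (∀ x ∈ M, ∀ y ∈ M, x ∩ y ∈ M) ↔
      ∃ T : List (HornClause V), M = {x | ∀ h ∈ T, HornClause.sat x h} := by
  classical
  constructor
  · intro hM
    -- clause for each x ∉ M
    have key : ∀ x : Set V, x ∉ M → ∃ c : HornClause V,
        ¬ HornClause.sat x c ∧ ∀ y ∈ M, HornClause.sat y c := by
      intro x hx
      by_cases hup : ∃ y ∈ M, x ⊆ y
      · set S : Set (Set V) := {y ∈ M | x ⊆ y} with hS
        have hSsub : S ⊆ M := fun y hy => hy.1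
        have hSne : S.Nonempty := by
          obtain ⟨y, hyM, hxy⟩ := hup; exact ⟨y, hyM, hxy⟩
        have hz : ⋂₀ S ∈ M := aux_sInter M hM S (Set.toFinite S) hSsub hSne
        have hxz : x ⊆ ⋂₀ S := fun v hv => Set.mem_sInter.mpr fun y hy => hy.2 hv
        have hne : x ≠ ⋂₀ S := fun h => hx (h ▸ hz)
        have hns : ¬ ⋂₀ S ⊆ x := fun h => hne (Set.Subset.antisymm hxz h)
        obtain ⟨q, hqz, hqx⟩ := Set.not_subset.mp hns
        refine ⟨⟨x, some q⟩, ?_, ?_⟩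
        · rintro (h | ⟨r, hr, hrx⟩)
          · exact h (le_refl x)
          · cases Option.some.inj hr; exact hqx hrx
        · intro y hyM
          by_cases hxy : x ⊆ y
          · exact Or.inr ⟨q, rfl, Set.sInter_subset_of_mem (show y ∈ S from ⟨hyM, hxy⟩) hqz⟩
          · exact Or.inl hxy
      · push_neg at hup
        refine ⟨⟨x, none⟩, ?_, ?_⟩
        · simp [HornClause.sat]
        · intro y hyM
          exact Or.inl fun h => hup y hyM h
    choose c hc1 hc2 using key
    let F : Finset (Set V) := Finset.univ.filter (· ∉ M)
    refine ⟨F.toList.attach.map (fun p => c p.1 (by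
      have := p.2
      have := Finset.mem_toList.mp this
      simpa [F] using this)), ?_⟩
    ext y
    simp only [Set.mem_setOf_eq, List.mem_map, List.mem_attach]
    constructor
    · intro hy h hh
      obtain ⟨p, _, rfl⟩ := hh
      exact hc2 _ _ y hy
    · intro hy
      by_contra hyM
      have hmem : y ∈ F.toList := Finset.mem_toList.mpr (by simp [F, hyM])
      exact hc1 y hyM (hy _ ⟨⟨y, hmem⟩, trivial, rfl⟩)
  · rintro ⟨T, rfl⟩
    intro x hx y hy h hh
    rcases hx h hh with h1 | ⟨q, hq, hqx⟩
    · exact Or.inl fun hsub => h1 (hsub.trans Set.inter_subset_left)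
    · rcases hy h hh with h1 | ⟨q', hq', hqy⟩
      · exact Or.inl fun hsub => h1 (hsub.trans Set.inter_subset_right)
      · rw [hq] at hq'; cases Option.some.inj hq'
        exact Or.inr ⟨q, hq, hqx, hqy⟩
end

section
/- The set of models of the Horn formulas entailed by an arbitrary propositional formula φ equals the intersection-closure of the set of models of φ. That is, mod({h Horn clause | φ ⊨ h}) = cl(mod(φ)), where cl denotes closure under (nonempty) intersections. -/
/-- Propositional formulas over variables `V`. -/
inductive Form (V : Type*) where
  | var : V → Form V
  | tru : Form V
  | fls : Form V
  | neg : Form V → Form V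
  | conj : Form V → Form V → Form V
  | disj : Form V → Form V → Form V
  | impl : Form V → Form V → Form V

/-- Satisfaction of a propositional formula by a model `x ⊆ V`. -/
def Form.sat {V : Type*} (x : Set V) : Form V → Prop
  | .var v => v ∈ x
  | .tru => True
  | .fls => False
  | .neg φ => ¬ φ.sat x
  | .conj φ ψ => φ.sat x ∧ ψ.sat x
  | .disj φ ψ => φ.sat x ∨ ψ.sat x
  | .impl φ ψ => φ.sat x → ψ.sat x

theorem stmt4 {V : Type*} [Fintype V] [Nonempty V] (φ : Form V) :
    {x : Set V | ∀ h : HornClause V,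
        (∀ y : Set V, Form.sat y φ → HornClause.sat y h) → HornClause.sat x h}
      = interClosure {x : Set V | Form.sat x φ} := by
  ext x
  simp only [Set.mem_setOf_eq]
  constructor
  · intro hx
    refine ⟨{y | Form.sat y φ ∧ x ⊆ y}, fun y hy => hy.1, ?_, ?_⟩
    · by_contra hne
      have hent : ∀ y : Set V, Form.sat y φ → HornClause.sat y ⟨x, none⟩ := by
        intro y hy
        left
        intro hsub
        exact hne ⟨y, hy, hsub⟩
      rcases hx ⟨x, none⟩ hent with h | ⟨q, hq, _⟩
      · exact h (subset_refl x)
      · simp at hq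
    · apply Set.Subset.antisymm
      · intro q hq y hy
        exact Set.mem_sInter.mp (Set.mem_sInter.mpr (fun z hz => hz.2 hq)) y hy
      · intro q hq
        have hent : ∀ y : Set V, Form.sat y φ → HornClause.sat y ⟨x, some q⟩ := by
          intro y hy
          by_cases hsub : x ⊆ y
          · exact Or.inr ⟨q, rfl, Set.mem_sInter.mp hq y ⟨hy, hsub⟩⟩
          · exact Or.inl hsub
        rcases hx ⟨x, some q⟩ hent with h | ⟨q', hq', hq'x⟩
        · exact absurd (subset_refl x) h
        · cases hq'
          exact hq'x
  · rintro ⟨N, hNM, ⟨y0, hy0⟩, rfl⟩ h hent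
    by_cases hsub : h.ant ⊆ ⋂₀ N
    · right
      rcases hent y0 (hNM hy0) with hb | ⟨q, hq, hqy⟩
      · exact absurd (fun a ha => (hsub ha) y0 hy0) hb
      refine ⟨q, hq, fun y hy => ?_⟩
      rcases hent y (hNM hy) with hb | ⟨q', hq', hq'y⟩
      · exact absurd (fun a ha => (hsub ha) y hy) hb
      · rw [hq] at hq'; cases hq'; exact hq'y
    · exact Or.inl hsub
end

section
/- Let E⁺ be a finite set of models (positive examples) and x a model with E⁺ₓ := {e ∈ E⁺ | x ⊊ e} nonempty. Define the metaclause horn(x) := ⋀x → ⋀(⋂E⁺ₓ \ x). Then x falsifies horn(x), and every e ∈ E⁺ satisfies horn(x). -/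
/-- horn_{E⁺}(x) = ⋀x → ⋀(⋂E⁺ₓ \ x) is falsified by x and satisfied by every
positive example, where E⁺ₓ = {e ∈ E⁺ | x ⊊ e}. A metaclause ⋀P → ⋀Q is
satisfied by y iff ¬ P ⊆ y ∨ Q ⊆ y. -/
theorem stmt8 {V : Type*} [Fintype V] (E : Set (Set V)) (hfin : E.Finite)
    (x : Set V) (hxE : x ∉ E)
    (hne : {e ∈ E | x ⊂ e}.Nonempty)
    (hcon : (⋂₀ {e ∈ E | x ⊂ e} \ x).Nonempty) :
    ¬ (¬ x ⊆ x ∨ ⋂₀ {e ∈ E | x ⊂ e} \ x ⊆ x) ∧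
      ∀ e ∈ E, (¬ x ⊆ e ∨ ⋂₀ {e' ∈ E | x ⊂ e'} \ x ⊆ e) := by
  obtain ⟨q, hq⟩ := hcon
  constructor
  · rintro (h | h)
    · exact h subset_rfl
    · exact hq.2 (h hq)
  · intro e he
    by_cases hxe : x ⊆ e
    · right
      have hlt : x ⊂ e := lt_of_le_of_ne hxe (fun h => hxE (h ▸ he))
      intro a ha
      exact ha.1 e ⟨he, hlt⟩
    · exact Or.inl hxe
end

section
/- For every propositional formula φ over a finite variable set V, the intersection-closure cl(mod(φ)) of its set of models is itself the set of models of a Horn formula; consequently there exists a unique tightest Horn approximation: a Horn formula ψ with mod(ψ) = cl(mod(φ)), and any Horn formula χ with φ ⊨ χ satisfies ψ ⊨ χ. -/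
/-- Horn clauses are preserved under intersections of nonempty families. -/
lemma horn_sInter {V : Type*} (h : HornClause V) (N : Set (Set V)) (hne : N.Nonempty)
    (hall : ∀ y ∈ N, HornClause.sat y h) : HornClause.sat (⋂₀ N) h := by
  by_cases hant : h.ant ⊆ ⋂₀ N
  · obtain ⟨y0, hy0⟩ := hne
    have hy0sat := hall y0 hy0
    rcases hy0sat with hbad | ⟨q, hq, _⟩
    · exact absurd (hant.trans (Set.sInter_subset_of_mem hy0)) hbad
    · refine Or.inr ⟨q, hq, ?_⟩
      intro y hy
      rcases hall y hy with hbad | ⟨q', hq', hq'y⟩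
      · exact absurd (hant.trans (Set.sInter_subset_of_mem hy)) hbad
      · rw [hq] at hq'; cases hq'; exact hq'y
  · exact Or.inl hant

/-- The intersection closure is closed under intersections of nonempty families. -/
lemma interClosure_closed {V : Type*} (M : Set (Set V)) (N : Set (Set V))
    (hNC : N ⊆ interClosure M) (hne : N.Nonempty) : ⋂₀ N ∈ interClosure M := by
  choose F hFsub hFne hFeq using fun y (hy : y ∈ N) => hNC hy
  obtain ⟨y0, hy0⟩ := hne
  refine ⟨⋃ (y : Set V) (hy : y ∈ N), F y hy, ?_, ?_, ?_⟩
  · intro s hs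
    simp only [Set.mem_iUnion] at hs
    obtain ⟨y, hy, hs⟩ := hs
    exact hFsub y hy hs
  · obtain ⟨s, hs⟩ := hFne y0 hy0
    exact ⟨s, Set.mem_iUnion.2 ⟨y0, Set.mem_iUnion.2 ⟨hy0, hs⟩⟩⟩
  · ext q
    simp only [Set.mem_sInter, Set.mem_iUnion]
    constructor
    · intro hq s ⟨y, hy, hs⟩
      have := hq y hy
      rw [hFeq y hy] at this
      exact this s hs
    · intro hq y hy
      rw [hFeq y hy]
      intro s hs
      exact hq s ⟨y, hy, hs⟩

/-- Separation: any model not in an intersection-closed set is excluded by a Horn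
clause satisfied by all members. -/
lemma separation {V : Type*} (M : Set (Set V)) (x : Set V) (hx : x ∉ interClosure M) :
    ∃ h : HornClause V, ¬ HornClause.sat x h ∧ ∀ y ∈ interClosure M, HornClause.sat y h := by
  classical
  set C := interClosure M with hC
  set N : Set (Set V) := {y ∈ C | x ⊆ y} with hN
  by_cases hne : N.Nonempty
  · have hz : ⋂₀ N ∈ C := interClosure_closed M N (fun y hy => hy.1) hne
    have hxz : x ⊆ ⋂₀ N := fun q hq => Set.mem_sInter.2 fun y hy => hy.2 hq
    have hne' : x ≠ ⋂₀ N := fun he => hx (he ▸ hz)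
    obtain ⟨q, hqz, hqx⟩ : ∃ q ∈ ⋂₀ N, q ∉ x := by
      by_contra hcon
      push_neg at hcon
      exact hne' (Set.Subset.antisymm hxz hcon)
    refine ⟨⟨x, some q⟩, ?_, ?_⟩
    · intro hs
      rcases hs with hbad | ⟨q', hq', hq'x⟩
      · exact hbad le_rfl
      · cases hq'; exact hqx hq'x
    · intro y hy
      by_cases hxy : x ⊆ y
      · exact Or.inr ⟨q, rfl, hqz y ⟨hy, hxy⟩⟩
      · exact Or.inl hxy
  · refine ⟨⟨x, none⟩, ?_, ?_⟩
    · intro hs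
      rcases hs with hbad | ⟨q', hq', _⟩
      · exact hbad le_rfl
      · cases hq'
    · intro y hy
      left
      intro hxy
      exact hne ⟨y, hy, hxy⟩

theorem stmt11 {V : Type*} [Fintype V] (φ : Form V) :
    ∃ T : List (HornClause V),
      {x : Set V | ∀ h ∈ T, HornClause.sat x h} = interClosure {x : Set V | Form.sat x φ} ∧
      ∀ χ : List (HornClause V),
        (∀ x : Set V, Form.sat x φ → ∀ h ∈ χ, HornClause.sat x h) →
        (∀ x : Set V, (∀ h ∈ T, HornClause.sat x h) → ∀ h ∈ χ, HornClause.sat x h) := by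
  classical
  set M : Set (Set V) := {x : Set V | Form.sat x φ} with hM
  set C := interClosure M with hC
  set g : Set V → Option (HornClause V) := fun x =>
    if hx : x ∈ C then none else some (separation M x hx).choose with hg
  set T : List (HornClause V) := (Finset.univ : Finset (Set V)).toList.filterMap g with hT
  have hmemT : ∀ h ∈ T, ∃ x, ∃ hx : x ∉ C, h = (separation M x hx).choose := by
    intro h hh
    rw [hT, List.mem_filterMap] at hh
    obtain ⟨x, _, hgx⟩ := hh
    rw [hg] at hgx
    by_cases hx : x ∈ C
    · simp [hx] at hgx
    · refine ⟨x, hx, ?_⟩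
      simp only [dif_neg hx, Option.some.injEq] at hgx
      exact hgx.symm
  have hTC : ∀ x, ∀ hx : x ∉ C, (separation M x hx).choose ∈ T := by
    intro x hx
    rw [hT, List.mem_filterMap]
    exact ⟨x, Finset.mem_toList.2 (Finset.mem_univ x), by simp [hg, dif_neg hx]⟩
  have hMain : {x : Set V | ∀ h ∈ T, HornClause.sat x h} = C := by
    ext x
    constructor
    · intro hx
      by_contra hxC
      have hmem := hTC x hxC
      have := hx _ hmem
      exact (separation M x hxC).choose_spec.1 this
    · intro hxC h hh
      obtain ⟨y, hy, rfl⟩ := hmemT h hh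
      exact (separation M y hy).choose_spec.2 x hxC
  refine ⟨T, hMain, ?_⟩
  intro χ hχ x hx h hh
  have hxC : x ∈ C := hMain ▸ hx
  obtain ⟨N, hNM, hNne, rfl⟩ := hxC
  exact horn_sInter h N hNne (fun y hy => hχ y (hNM hy) h hh)
end
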